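/- arXiv:2204.09928 — 6 statements merged into one kernel-verified Lean document; each statement's English description precedes it below -/
import Mathlib

section
/- For all real n×k matrices X and Y, XX^T = YY^T if and only if there exists an orthogonal k×k matrix U such that XU = Y. -/
open Matrix

lemma inner_toEuclideanLin (n k : ℕ) (X : Matrix (Fin n) (Fin k) ℝ)
    (u v : EuclideanSpace ℝ (Fin n)) :
    inner ℝ (Matrix.toEuclideanLin Xᵀ u) (Matrix.toEuclideanLin Xᵀ v)
      = (u : Fin n → ℝ) ⬝ᵥ ((X * Xᵀ) *ᵥ (v : Fin n → ℝ)) := by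
  simp only [Matrix.toEuclideanLin_apply, EuclideanSpace.inner_eq_star_dotProduct,
    Equiv.apply_symm_apply, star_trivial]
  rw [dotProduct_comm, Matrix.mulVec_transpose (A := X) (x := u.ofLp),
    ← Matrix.dotProduct_mulVec, ← Matrix.mulVec_mulVec]

lemma real_inner_euclidean (k : ℕ) (u v : EuclideanSpace ℝ (Fin k)) :
    (inner ℝ u v : ℝ) = (u : Fin k → ℝ) ⬝ᵥ (v : Fin k → ℝ) := by
  simp only [EuclideanSpace.inner_eq_star_dotProduct, star_trivial]
  exact dotProduct_comm _ _

lemma toEuclideanLin_mul (m k l : ℕ) (M : Matrix (Fin m) (Fin k) ℝ)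
    (N : Matrix (Fin k) (Fin l) ℝ) :
    Matrix.toEuclideanLin (M * N)
      = (Matrix.toEuclideanLin M).comp (Matrix.toEuclideanLin N) := by
  ext v
  simp [Matrix.toEuclideanLin_apply, Matrix.mulVec_mulVec]

lemma eq_of_dot_mulVec (k : ℕ) (A B : Matrix (Fin k) (Fin k) ℝ)
    (h : ∀ u v : Fin k → ℝ, u ⬝ᵥ (A *ᵥ v) = u ⬝ᵥ (B *ᵥ v)) : A = B := by
  ext i j
  have := h (Pi.single i 1) (Pi.single j 1)
  simpa [Matrix.mulVec_single, single_dotProduct] using this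

theorem square_roots_related_by_orthogonal (n k : ℕ)
    (X Y : Matrix (Fin n) (Fin k) ℝ) :
    X * Xᵀ = Y * Yᵀ ↔ ∃ U : Matrix (Fin k) (Fin k) ℝ, Uᵀ * U = 1 ∧ X * U = Y := by
  constructor
  · intro h
    set A := Matrix.toEuclideanLin Xᵀ with hA
    set B := Matrix.toEuclideanLin Yᵀ with hB
    have hinner : ∀ u v, (inner ℝ (A u) (A v) : ℝ) = inner ℝ (B u) (B v) := by
      intro u v
      rw [hA, hB, inner_toEuclideanLin, inner_toEuclideanLin, h]
    have hnorm : ∀ u, ‖A u‖ = ‖B u‖ := by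
      intro u
      rw [← Real.sqrt_sq (norm_nonneg (A u)), ← Real.sqrt_sq (norm_nonneg (B u)),
        ← real_inner_self_eq_norm_sq, ← real_inner_self_eq_norm_sq, hinner]
    have hker : LinearMap.ker A ≤ LinearMap.ker B := by
      intro u hu
      rw [LinearMap.mem_ker] at hu ⊢
      have := hnorm u
      rw [hu, norm_zero] at this
      exact norm_eq_zero.mp this.symm
    let g : LinearMap.range A →ₗ[ℝ] EuclideanSpace ℝ (Fin k) :=
      ((LinearMap.ker A).liftQ B hker).comp (LinearMap.quotKerEquivRange A).symm.toLinearMap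
    have hg : ∀ u : EuclideanSpace ℝ (Fin n), g ⟨A u, LinearMap.mem_range_self A u⟩ = B u := by
      intro u
      have : (LinearMap.quotKerEquivRange A).symm ⟨A u, LinearMap.mem_range_self A u⟩
          = Submodule.Quotient.mk u := by
        apply (LinearMap.quotKerEquivRange A).injective
        simp [LinearMap.quotKerEquivRange_apply_mk]
      simp only [g, LinearMap.comp_apply, LinearEquiv.coe_toLinearMap, this]
      simp [Submodule.liftQ_apply]
    let L : LinearMap.range A →ₗᵢ[ℝ] EuclideanSpace ℝ (Fin k) :=
      ⟨g, by
        rintro ⟨_, u, rfl⟩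
        rw [hg u, ← hnorm u]
        rfl⟩
    let F := L.extend
    have hF : ∀ u, F (A u) = B u := by
      intro u
      exact (L.extend_apply ⟨A u, LinearMap.mem_range_self A u⟩).trans (hg u)
    -- extract the matrix of F
    set M := Matrix.toEuclideanLin.symm F.toLinearMap with hM
    have hMF : Matrix.toEuclideanLin M = F.toLinearMap := by
      rw [hM]; exact Matrix.toEuclideanLin.apply_symm_apply _
    -- orthogonality : Mᵀ * M = 1
    have horth : Mᵀ * M = 1 := by
      apply eq_of_dot_mulVec
      intro u v
      let u' : EuclideanSpace ℝ (Fin k) := WithLp.toLp 2 u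
      let v' : EuclideanSpace ℝ (Fin k) := WithLp.toLp 2 v
      have h1 := inner_toEuclideanLin k k Mᵀ u' v'
      rw [Matrix.transpose_transpose, hMF] at h1
      have h2 : (inner ℝ (F.toLinearMap u') (F.toLinearMap v') : ℝ) = inner ℝ u' v' :=
        F.inner_map_map u' v'
      have h3 := real_inner_euclidean k u' v'
      show (u' : Fin k → ℝ) ⬝ᵥ ((Mᵀ * M) *ᵥ (v' : Fin k → ℝ)) = (u' : Fin k → ℝ) ⬝ᵥ (1 *ᵥ (v' : Fin k → ℝ))
      rw [← h1, h2, h3, Matrix.one_mulVec]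
    -- X * Mᵀ = Y
    have hcomp : B = (Matrix.toEuclideanLin M).comp A := by
      rw [hMF]
      exact LinearMap.ext fun v => (hF v).symm
    have hYX : Yᵀ = M * Xᵀ := by
      apply Matrix.toEuclideanLin.injective
      rw [toEuclideanLin_mul, ← hA, ← hB, hcomp]
    refine ⟨Mᵀ, ?_, ?_⟩
    · rw [Matrix.transpose_transpose]
      exact mul_eq_one_comm.mp horth
    · have := congrArg Matrix.transpose hYX
      rw [Matrix.transpose_transpose, Matrix.transpose_mul, Matrix.transpose_transpose] at this
      exact this.symm
  · rintro ⟨U, hU, rfl⟩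
    have hU' : U * Uᵀ = 1 := mul_eq_one_comm.mp hU
    rw [Matrix.transpose_mul, ← Matrix.mul_assoc, Matrix.mul_assoc X U Uᵀ, hU', Matrix.mul_one]
end

section
/- The Bures-Wasserstein distance d(Σ,Λ) = inf over orthogonal R of the Frobenius distance between Σ^{1/2} and Λ^{1/2}R equals tr(Σ + Λ − 2(Σ^{1/2} Λ Σ^{1/2})^{1/2})^{1/2}, for all symmetric positive semi-definite n×n matrices Σ, Λ. -/
open Matrix

open Classical in
/-- The symmetric PSD square root of a PSD matrix (junk value `0` otherwise). -/
noncomputable def psdSqrt {n : ℕ} (A : Matrix (Fin n) (Fin n) ℝ) : Matrix (Fin n) (Fin n) ℝ :=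
  if h : A.PosSemidef then
    h.1.eigenvectorUnitary.1 * diagonal ((↑) ∘ Real.sqrt ∘ h.1.eigenvalues) *
      (star h.1.eigenvectorUnitary : Matrix (Fin n) (Fin n) ℝ) else 0

/-- Frobenius (Euclidean) distance between matrices. -/
noncomputable def frobDist {m k : ℕ} (A B : Matrix (Fin m) (Fin k) ℝ) : ℝ :=
  Real.sqrt (((A - B)ᵀ * (A - B)).trace)

namespace Matrix.PosSemidef

open Classical in
/-- The PSD square root (port helper). -/
noncomputable def sqrt {n : ℕ} {A : Matrix (Fin n) (Fin n) ℝ} (h : A.PosSemidef) :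
    Matrix (Fin n) (Fin n) ℝ :=
  h.1.eigenvectorUnitary.1 * diagonal ((↑) ∘ Real.sqrt ∘ h.1.eigenvalues) *
    (star h.1.eigenvectorUnitary : Matrix (Fin n) (Fin n) ℝ)

lemma posSemidef_sqrt {n : ℕ} {A : Matrix (Fin n) (Fin n) ℝ} (h : A.PosSemidef) :
    h.sqrt.PosSemidef := by
  unfold sqrt
  rw [Matrix.star_eq_conjTranspose]
  exact (posSemidef_diagonal_iff.2 (fun i => Real.sqrt_nonneg _)).mul_mul_conjTranspose_same _

lemma sqrt_mul_self {n : ℕ} {A : Matrix (Fin n) (Fin n) ℝ} (h : A.PosSemidef) :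
    h.sqrt * h.sqrt = A := by
  classical
  unfold sqrt
  set V : Matrix (Fin n) (Fin n) ℝ := (h.1.eigenvectorUnitary : Matrix (Fin n) (Fin n) ℝ)
  have hU : star V * V = 1 := Unitary.coe_star_mul_self h.1.eigenvectorUnitary
  have hD : diagonal ((↑) ∘ Real.sqrt ∘ h.1.eigenvalues) *
      diagonal ((↑) ∘ Real.sqrt ∘ h.1.eigenvalues)
        = diagonal (RCLike.ofReal ∘ h.1.eigenvalues : Fin n → ℝ) := by
    rw [diagonal_mul_diagonal]
    congr 1
    funext i
    simp [Real.mul_self_sqrt (h.eigenvalues_nonneg i)]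
  calc V * diagonal ((↑) ∘ Real.sqrt ∘ h.1.eigenvalues) * star V *
        (V * diagonal ((↑) ∘ Real.sqrt ∘ h.1.eigenvalues) * star V)
      = V * diagonal ((↑) ∘ Real.sqrt ∘ h.1.eigenvalues) * (star V * V) *
          diagonal ((↑) ∘ Real.sqrt ∘ h.1.eigenvalues) * star V := by
        simp only [Matrix.mul_assoc]
    _ = V * (diagonal ((↑) ∘ Real.sqrt ∘ h.1.eigenvalues) *
          diagonal ((↑) ∘ Real.sqrt ∘ h.1.eigenvalues)) * star V := by
        rw [hU, Matrix.mul_one]; simp only [Matrix.mul_assoc]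
    _ = A := by
        rw [hD]
        conv_rhs => rw [h.1.spectral_theorem]
        rfl

end Matrix.PosSemidef

namespace BWAux

variable {n : ℕ}

lemma trace_eq_sum_sum (K Q : Matrix (Fin n) (Fin n) ℝ) :
    (K * Q).trace = ∑ i, ∑ j, K i j * Q j i := by
  simp [Matrix.trace, Matrix.diag, Matrix.mul_apply]

lemma row_dot {K : Matrix (Fin n) (Fin n) ℝ} {d : Fin n → ℝ}
    (hK : K * Kᵀ = diagonal d) (i j : Fin n) :
    ∑ l, K i l * K j l = diagonal d i j := by
  have := Matrix.ext_iff.2 hK i j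
  simpa [Matrix.mul_apply] using this

lemma col_dot {Q : Matrix (Fin n) (Fin n) ℝ} (hQ : Qᵀ * Q = 1) (i j : Fin n) :
    ∑ l, Q l i * Q l j = if i = j then 1 else 0 := by
  have := Matrix.ext_iff.2 hQ i j
  simpa [Matrix.mul_apply, Matrix.one_apply] using this

lemma trace_mul_le_of_orth {K Q : Matrix (Fin n) (Fin n) ℝ} {d : Fin n → ℝ}
    (hK : K * Kᵀ = diagonal d) (hQ : Qᵀ * Q = 1) :
    (K * Q).trace ≤ ∑ i, Real.sqrt (d i) := by
  rw [trace_eq_sum_sum]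
  apply Finset.sum_le_sum
  intro i _
  have hrow : ∑ l, K i l ^ 2 = d i := by
    have := row_dot hK i i
    simpa [pow_two] using this
  have hcol : ∑ l, Q l i ^ 2 = 1 := by
    have := col_dot hQ i i
    simpa [pow_two] using this
  have h2 : (∑ j, K i j * Q j i) ^ 2 ≤ d i := by
    calc (∑ j, K i j * Q j i) ^ 2
        ≤ (∑ j, K i j ^ 2) * ∑ j, Q j i ^ 2 :=
          Finset.sum_mul_sq_le_sq_mul_sq _ _ _
      _ = d i := by rw [hrow, hcol, mul_one]
  calc ∑ j, K i j * Q j i ≤ |∑ j, K i j * Q j i| := le_abs_self _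
    _ = Real.sqrt ((∑ j, K i j * Q j i) ^ 2) := (Real.sqrt_sq_eq_abs _).symm
    _ ≤ Real.sqrt (d i) := Real.sqrt_le_sqrt h2

lemma exists_orth_trace_eq {K : Matrix (Fin n) (Fin n) ℝ} {d : Fin n → ℝ}
    (hd : ∀ i, 0 ≤ d i) (hK : K * Kᵀ = diagonal d) :
    ∃ Q : Matrix (Fin n) (Fin n) ℝ,
      Qᵀ * Q = 1 ∧ (K * Q).trace = ∑ i, Real.sqrt (d i) := by
  classical
  have hrow := row_dot hK
  have hzero : ∀ i, d i = 0 → ∀ j, K i j = 0 := by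
    intro i hi j
    have h0 : ∑ l, K i l * K i l = 0 := by
      rw [hrow i i, Matrix.diagonal_apply_eq, hi]
    have := (Finset.sum_eq_zero_iff_of_nonneg
      (fun l _ => mul_self_nonneg (K i l))).1 h0 j (Finset.mem_univ j)
    exact mul_self_eq_zero.1 this
  let k : Fin n → EuclideanSpace ℝ (Fin n) := fun i => WithLp.toLp 2 (fun j => K i j)
  let v : Fin n → EuclideanSpace ℝ (Fin n) := fun i => (Real.sqrt (d i))⁻¹ • k i
  have hinner : ∀ i j, (inner ℝ (k i) (k j) : ℝ) = diagonal d i j := by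
    intro i j
    have : (inner ℝ (k i) (k j) : ℝ) = ∑ l, K i l * K j l := by
      rw [PiLp.inner_apply]
      simp [k, RCLike.inner_apply]
      exact Finset.sum_congr rfl fun _ _ => mul_comm _ _
    rw [this, hrow i j]
  have hv : Orthonormal ℝ (Set.restrict {i | d i ≠ 0} v) := by
    rw [orthonormal_iff_ite]
    rintro ⟨i, hi⟩ ⟨j, hj⟩
    simp only [Set.restrict_apply, v]
    change inner ℝ ((Real.sqrt (d i))⁻¹ • k i) ((Real.sqrt (d j))⁻¹ • k j) = _
    rw [real_inner_smul_left, real_inner_smul_right, hinner i j]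
    by_cases hij : i = j
    · subst hij
      have hdi : 0 < d i := lt_of_le_of_ne (hd i) (Ne.symm hi)
      rw [Matrix.diagonal_apply_eq, if_pos rfl, ← mul_assoc, ← mul_inv,
        Real.mul_self_sqrt hdi.le, inv_mul_cancel₀ hi]
    · rw [Matrix.diagonal_apply_ne _ hij, if_neg (by simpa [Subtype.ext_iff] using hij)]
      ring
  obtain ⟨b, hb⟩ := hv.exists_orthonormalBasis_extension_of_card_eq
    (by simp [finrank_euclideanSpace])
  let Q : Matrix (Fin n) (Fin n) ℝ := Matrix.of fun l i => b i l
  have hQ : Qᵀ * Q = 1 := by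
    ext i j
    have := orthonormal_iff_ite.1 b.orthonormal i j
    have h1 : (inner ℝ (b i) (b j) : ℝ) = ∑ l, b i l * b j l := by
      rw [PiLp.inner_apply]
      simp [RCLike.inner_apply]
      exact Finset.sum_congr rfl fun _ _ => mul_comm _ _
    rw [h1] at this
    simpa [Matrix.mul_apply, Q, Matrix.one_apply] using this
  refine ⟨Q, hQ, ?_⟩
  rw [trace_eq_sum_sum]
  apply Finset.sum_congr rfl
  intro i _
  by_cases hi : d i = 0
  · rw [hi, Real.sqrt_zero]
    apply Finset.sum_eq_zero
    intro j _
    rw [hzero i hi j, zero_mul]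
  · have hdi : 0 < d i := lt_of_le_of_ne (hd i) (Ne.symm hi)
    have hbi : b i = v i := hb i hi
    have hQji : ∀ j, Q j i = (Real.sqrt (d i))⁻¹ * K i j := by
      intro j
      show b i j = _
      rw [hbi]
      show (Real.sqrt (d i))⁻¹ • (k i) j = _
      rfl
    calc ∑ j, K i j * Q j i = (Real.sqrt (d i))⁻¹ * ∑ j, K i j * K i j := by
          rw [Finset.mul_sum]
          exact Finset.sum_congr rfl fun j _ => by rw [hQji j]; ring
      _ = (Real.sqrt (d i))⁻¹ * d i := by rw [hrow i i, Matrix.diagonal_apply_eq]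
      _ = Real.sqrt (d i) := by
          rw [inv_mul_eq_div, eq_comm, eq_div_iff (by positivity),
            Real.mul_self_sqrt hdi.le]

lemma key (N X : Matrix (Fin n) (Fin n) ℝ) (hNX : N * Nᵀ = X) (hX : X.PosSemidef) :
    (∀ R : Matrix (Fin n) (Fin n) ℝ, Rᵀ * R = 1 → (N * R).trace ≤ hX.sqrt.trace) ∧
    ∃ R : Matrix (Fin n) (Fin n) ℝ, Rᵀ * R = 1 ∧ (N * R).trace = hX.sqrt.trace := by
  subst hNX
  set V : Matrix (Fin n) (Fin n) ℝ := (hX.1.eigenvectorUnitary : Matrix (Fin n) (Fin n) ℝ)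
    with hVdef
  set d : Fin n → ℝ := hX.1.eigenvalues with hddef
  have hstar : star V = Vᵀ := by
    rw [Matrix.star_eq_conjTranspose, Matrix.conjTranspose_eq_transpose_of_trivial]
  have hV1 : Vᵀ * V = 1 := by
    rw [← hstar]; exact (Unitary.coe_star_mul_self hX.1.eigenvectorUnitary)
  have hV2 : V * Vᵀ = 1 := mul_eq_one_comm.1 hV1
  set K : Matrix (Fin n) (Fin n) ℝ := Vᵀ * N with hKdef
  have hKK : K * Kᵀ = diagonal d := by
    have hspec : star V * (N * Nᵀ) * V = diagonal (RCLike.ofReal ∘ hX.1.eigenvalues) := by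
      have := hX.1.conjStarAlgAut_star_eigenvectorUnitary
      rwa [Unitary.conjStarAlgAut_apply, Unitary.coe_star, star_star] at this
    rw [hstar] at hspec
    have hco : (RCLike.ofReal ∘ hX.1.eigenvalues : Fin n → ℝ) = d := by
      funext i; simp [hddef]
    rw [hco] at hspec
    calc K * Kᵀ = Vᵀ * N * (Nᵀ * V) := by
          rw [hKdef, Matrix.transpose_mul, Matrix.transpose_transpose]
      _ = Vᵀ * (N * Nᵀ) * V := by noncomm_ring
      _ = diagonal d := hspec
  have hd : ∀ i, 0 ≤ d i := fun i => hX.eigenvalues_nonneg i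
  have htr : hX.sqrt.trace = ∑ i, Real.sqrt (d i) := by
    rw [Matrix.PosSemidef.sqrt]
    rw [Matrix.trace_mul_cycle]
    have : star (hX.1.eigenvectorUnitary : Matrix (Fin n) (Fin n) ℝ) *
        (hX.1.eigenvectorUnitary : Matrix (Fin n) (Fin n) ℝ) = 1 :=
      Unitary.coe_star_mul_self hX.1.eigenvectorUnitary
    rw [this, one_mul, Matrix.trace_diagonal]
    simp [hddef]
  have hVK : V * K = N := by
    rw [hKdef, ← Matrix.mul_assoc, hV2, Matrix.one_mul]
  constructor
  · intro R hR
    have hQ : (R * V)ᵀ * (R * V) = 1 := by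
      rw [Matrix.transpose_mul]
      calc Vᵀ * Rᵀ * (R * V) = Vᵀ * (Rᵀ * R) * V := by noncomm_ring
        _ = 1 := by rw [hR, Matrix.mul_one, hV1]
    have h5 : (N * R).trace = (K * (R * V)).trace := by
      have e : K * (R * V) = Vᵀ * (N * R) * V := by rw [hKdef]; noncomm_ring
      rw [e, Matrix.trace_mul_cycle, hV2, Matrix.one_mul]
    rw [h5, htr]
    exact trace_mul_le_of_orth hKK hQ
  · obtain ⟨Q, hQ, hQtr⟩ := exists_orth_trace_eq hd hKK
    refine ⟨Q * Vᵀ, ?_, ?_⟩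
    · rw [Matrix.transpose_mul, Matrix.transpose_transpose]
      calc V * Qᵀ * (Q * Vᵀ) = V * (Qᵀ * Q) * Vᵀ := by noncomm_ring
        _ = 1 := by rw [hQ, Matrix.mul_one, hV2]
    · rw [htr, ← hQtr, ← Matrix.mul_assoc, Matrix.trace_mul_comm, ← Matrix.mul_assoc,
        ← hKdef]

lemma frob_expand {A B : Matrix (Fin n) (Fin n) ℝ}
    (hA : A.PosSemidef) (hB : B.PosSemidef) {R : Matrix (Fin n) (Fin n) ℝ}
    (hR : Rᵀ * R = 1) :
    ((hA.sqrt - hB.sqrt * R)ᵀ * (hA.sqrt - hB.sqrt * R)).trace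
      = A.trace + B.trace - 2 * ((hA.sqrt * hB.sqrt) * R).trace := by
  set S := hA.sqrt with hSdef
  set T := hB.sqrt with hTdef
  have hSt : Sᵀ = S := by
    rw [← Matrix.conjTranspose_eq_transpose_of_trivial]
    exact hA.posSemidef_sqrt.1
  have hTt : Tᵀ = T := by
    rw [← Matrix.conjTranspose_eq_transpose_of_trivial]
    exact hB.posSemidef_sqrt.1
  have hRR : R * Rᵀ = 1 := mul_eq_one_comm.1 hR
  have e1 : (S - T * R)ᵀ * (S - T * R)
      = S * S - S * (T * R) - (Rᵀ * T) * S + Rᵀ * (T * T) * R := by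
    rw [Matrix.transpose_sub, Matrix.transpose_mul, hSt, hTt]
    noncomm_ring
  rw [e1, Matrix.trace_add, Matrix.trace_sub, Matrix.trace_sub]
  have h1 : (S * S).trace = A.trace := by rw [hA.sqrt_mul_self]
  have h2 : (Rᵀ * (T * T) * R).trace = B.trace := by
    rw [hB.sqrt_mul_self, Matrix.trace_mul_cycle, hRR, Matrix.one_mul]
  have h3 : ((Rᵀ * T) * S).trace = ((S * T) * R).trace := by
    rw [← Matrix.trace_transpose ((Rᵀ * T) * S), Matrix.transpose_mul, Matrix.transpose_mul,
      Matrix.transpose_transpose, hSt, hTt, Matrix.mul_assoc]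
  have h4 : (S * (T * R)).trace = ((S * T) * R).trace := by rw [Matrix.mul_assoc]
  rw [h1, h2, h3, h4]
  ring

end BWAux

theorem buresWasserstein_dist_formula (n : ℕ) (A B : Matrix (Fin n) (Fin n) ℝ)
    (hA : A.PosSemidef) (hB : B.PosSemidef) :
    (⨅ R : {R : Matrix (Fin n) (Fin n) ℝ // Rᵀ * R = 1},
        frobDist (psdSqrt A) (psdSqrt B * R.1))
      = Real.sqrt ((A + B - 2 • psdSqrt (psdSqrt A * B * psdSqrt A)).trace) := by
  classical
  have hpsdA : psdSqrt A = hA.sqrt := dif_pos hA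
  have hpsdB : psdSqrt B = hB.sqrt := dif_pos hB
  set S := hA.sqrt with hSdef
  set T := hB.sqrt with hTdef
  have hSt : Sᵀ = S := by
    rw [← Matrix.conjTranspose_eq_transpose_of_trivial]
    exact hA.posSemidef_sqrt.1
  have hTt : Tᵀ = T := by
    rw [← Matrix.conjTranspose_eq_transpose_of_trivial]
    exact hB.posSemidef_sqrt.1
  set N := S * T with hNdef
  have hNNt : N * Nᵀ = S * B * S := by
    rw [hNdef, Matrix.transpose_mul, hSt, hTt]
    calc S * T * (T * S) = S * (T * T) * S := by noncomm_ring
      _ = S * B * S := by rw [hB.sqrt_mul_self]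
  have hX : (S * B * S).PosSemidef := by
    rw [← hNNt, ← Matrix.conjTranspose_eq_transpose_of_trivial]
    exact Matrix.posSemidef_self_mul_conjTranspose N
  have hpsdX : psdSqrt (S * B * S) = hX.sqrt := dif_pos hX
  obtain ⟨hub, R₀, hR₀, hR₀tr⟩ := BWAux.key N (S * B * S) hNNt hX
  haveI : Nonempty {R : Matrix (Fin n) (Fin n) ℝ // Rᵀ * R = 1} :=
    ⟨⟨1, by simp⟩⟩
  have hF : ∀ R : {R : Matrix (Fin n) (Fin n) ℝ // Rᵀ * R = 1},
      frobDist S (T * R.1)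
        = Real.sqrt (A.trace + B.trace - 2 * (N * R.1).trace) := by
    intro R
    rw [frobDist, BWAux.frob_expand hA hB R.2]
  have hmin : ∀ R : {R : Matrix (Fin n) (Fin n) ℝ // Rᵀ * R = 1},
      Real.sqrt (A.trace + B.trace - 2 * hX.sqrt.trace) ≤ frobDist S (T * R.1) := by
    intro R
    rw [hF R]
    apply Real.sqrt_le_sqrt
    have := hub R.1 R.2
    linarith
  have hval : frobDist S (T * R₀)
      = Real.sqrt (A.trace + B.trace - 2 * hX.sqrt.trace) := by
    rw [hF ⟨R₀, hR₀⟩, hR₀tr]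
  have hInf : (⨅ R : {R : Matrix (Fin n) (Fin n) ℝ // Rᵀ * R = 1},
      frobDist S (T * R.1))
        = Real.sqrt (A.trace + B.trace - 2 * hX.sqrt.trace) := by
    refine le_antisymm ?_ (le_ciInf hmin)
    have hbdd : BddBelow (Set.range fun R : {R : Matrix (Fin n) (Fin n) ℝ // Rᵀ * R = 1} =>
        frobDist S (T * R.1)) := by
      refine ⟨0, ?_⟩
      rintro x ⟨R, rfl⟩
      exact Real.sqrt_nonneg _
    calc (⨅ R : {R : Matrix (Fin n) (Fin n) ℝ // Rᵀ * R = 1}, frobDist S (T * R.1))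
        ≤ frobDist S (T * R₀) := ciInf_le hbdd ⟨R₀, hR₀⟩
      _ = _ := hval
  rw [hpsdA, hpsdB, hpsdX, hInf]
  congr 1
  have : (A + B - 2 • hX.sqrt).trace = A.trace + B.trace - 2 * hX.sqrt.trace := by
    rw [two_smul, Matrix.trace_sub, Matrix.trace_add, Matrix.trace_add]
    ring
  rw [this]
end

section
/- For Σ ∈ Sym⁺(n) and V ∈ Sym(n), the matrix Σ + tV + t² S_Σ(V) Σ S_Σ(V) equals (I + tS_Σ(V)) Σ (I + tS_Σ(V)), and hence is positive definite if and only if I + tS_Σ(V) is invertible, i.e., −1/t is not an eigenvalue of S_Σ(V). -/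
open Matrix

lemma aux_conj_posdef {n : ℕ} {A B : Matrix (Fin n) (Fin n) ℝ}
    (hA : A.PosDef) (hB : Bᵀ = B) (hU : IsUnit B) : (B * A * B).PosDef := by
  rw [Matrix.posDef_iff_dotProduct_mulVec]
  constructor
  · show (B * A * B)ᴴ = B * A * B
    have hAh := hA.isHermitian.eq
    simp only [conjTranspose_mul]
    rw [show Bᴴ = B from by rw [conjTranspose_eq_transpose_of_trivial, hB],
      hAh, Matrix.mul_assoc]
  · intro x hx
    have hBx : B.mulVec x ≠ 0 := by
      intro h
      exact hx ((Matrix.mulVec_injective_iff_isUnit.mpr hU).eq_iff.mp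
        (by simpa using h))
    have key : star x ⬝ᵥ (B * A * B).mulVec x
        = star (B.mulVec x) ⬝ᵥ A.mulVec (B.mulVec x) := by
      simp only [star_trivial, ← mulVec_mulVec, dotProduct_mulVec]
      rw [show x ᵥ* B = B *ᵥ x from by rw [← mulVec_transpose, hB]]
    rw [key]
    exact hA.dotProduct_mulVec_pos hBx

theorem geodesic_factorization_and_posdef (n : ℕ)
    (A V S : Matrix (Fin n) (Fin n) ℝ) (t : ℝ) (ht : t ≠ 0)
    (hA : A.PosDef) (hV : Vᵀ = V) (hS : Sᵀ = S) (hSyl : A * S + S * A = V) :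
    A + t • V + (t ^ 2) • (S * A * S) = (1 + t • S) * A * (1 + t • S) ∧
    ((A + t • V + (t ^ 2) • (S * A * S)).PosDef ↔ IsUnit (1 + t • S)) ∧
    (IsUnit (1 + t • S) ↔
      ¬ ∃ x : Fin n → ℝ, x ≠ 0 ∧ S.mulVec x = (-1 / t) • x) := by
  have hBt : (1 + t • S)ᵀ = 1 + t • S := by
    simp [transpose_add, transpose_smul, hS]
  have hfac : A + t • V + (t ^ 2) • (S * A * S) = (1 + t • S) * A * (1 + t • S) := by
    rw [← hSyl]
    simp only [Matrix.add_mul, Matrix.mul_add, Matrix.one_mul, Matrix.mul_one,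
      Matrix.smul_mul, Matrix.mul_smul, smul_add, smul_smul]
    ring_nf
    noncomm_ring
  refine ⟨hfac, ?_, ?_⟩
  · rw [hfac]
    constructor
    · intro hpd
      rw [Matrix.isUnit_iff_isUnit_det, isUnit_iff_ne_zero]
      intro hdet
      have := hpd.det_pos
      rw [Matrix.det_mul, Matrix.det_mul, hdet] at this
      simp at this
    · intro hU
      exact aux_conj_posdef hA hBt hU
  · have h1 : IsUnit (1 + t • S) ↔ ¬ ((1 + t • S).det = 0) := by
      rw [Matrix.isUnit_iff_isUnit_det, isUnit_iff_ne_zero]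
    rw [h1, ← Matrix.exists_mulVec_eq_zero_iff]
    refine not_congr ?_
    constructor
    · rintro ⟨x, hx, hmx⟩
      refine ⟨x, hx, ?_⟩
      have : x + t • S.mulVec x = 0 := by
        simpa [add_mulVec, smul_mulVec, one_mulVec] using hmx
      have h3 : t • S.mulVec x = -x := by
        linear_combination (norm := module) this
      calc S.mulVec x = t⁻¹ • (t • S.mulVec x) := by
            rw [smul_smul, inv_mul_cancel₀ ht, one_smul]
        _ = (-1 / t) • x := by
            rw [h3, smul_neg, neg_div, one_div, neg_smul]
    · rintro ⟨x, hx, hmx⟩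
      refine ⟨x, hx, ?_⟩
      rw [add_mulVec, smul_mulVec, one_mulVec, hmx]
      rw [smul_smul]
      field_simp
      rw [neg_one_smul, add_neg_cancel]
end

section
/- Let X ∈ ℝ^{n×k} have full rank k and X_⊥ ∈ ℝ^{n×(n−k)} have orthonormal columns orthogonal to those of X. Then a symmetric matrix V ∈ Sym(n) satisfies X_⊥^T V X_⊥ = 0 if and only if V = XW^T + WX^T for some W ∈ ℝ^{n×k}, i.e., the tangent space to Sym⁺(n,k) at Σ = XX^T is {V ∈ Sym(n) : X_⊥^T V X_⊥ = 0}. -/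
open Matrix

lemma aux_isUnit_of_rank_eq_card {m : Type*} [Fintype m] [DecidableEq m]
    (A : Matrix m m ℝ) (h : A.rank = Fintype.card m) : IsUnit A := by
  rw [← Matrix.mulVec_surjective_iff_isUnit]
  have hr : LinearMap.range A.mulVecLin = ⊤ := by
    apply Submodule.eq_top_of_finrank_eq
    rw [show Module.finrank ℝ (LinearMap.range A.mulVecLin) = A.rank from rfl, h]
    simp [Module.finrank_fintype_fun_eq_card]
  intro y
  obtain ⟨x, hx⟩ := LinearMap.range_eq_top.mp hr y
  exact ⟨x, by simpa using hx⟩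

theorem tangent_space_fixed_rank (n k : ℕ)
    (X : Matrix (Fin n) (Fin k) ℝ) (hX : X.rank = k)
    (Xp : Matrix (Fin n) (Fin (n - k)) ℝ)
    (hXp1 : Xpᵀ * Xp = 1) (hXp2 : Xᵀ * Xp = 0)
    (V : Matrix (Fin n) (Fin n) ℝ) (hV : Vᵀ = V) :
    Xpᵀ * V * Xp = 0 ↔
      ∃ W : Matrix (Fin n) (Fin k) ℝ, V = X * Wᵀ + W * Xᵀ := by
  have hXp2' : Xpᵀ * X = 0 := by
    have := congrArg Matrix.transpose hXp2
    simpa [Matrix.transpose_mul] using this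
  constructor
  · intro hVXp
    -- A = XᵀX is invertible
    set A : Matrix (Fin k) (Fin k) ℝ := Xᵀ * X with hA
    have hArank : A.rank = k := by
      rw [hA, Matrix.rank_transpose_mul_self, hX]
    have hAunit : IsUnit A := aux_isUnit_of_rank_eq_card A (by simpa using hArank)
    have hAdet : IsUnit A.det := (Matrix.isUnit_iff_isUnit_det A).mp hAunit
    have hAi1 : A⁻¹ * A = 1 := Matrix.nonsing_inv_mul A hAdet
    have hAi2 : A * A⁻¹ = 1 := Matrix.mul_nonsing_inv A hAdet
    have hAT : Aᵀ = A := by rw [hA, Matrix.transpose_mul, Matrix.transpose_transpose]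
    have hAiT : (A⁻¹)ᵀ = A⁻¹ := by rw [Matrix.transpose_nonsing_inv, hAT]
    -- resolution of identity
    have hkn : k ≤ n := by
      have := X.rank_le_card_height
      simpa [hX] using this
    have e : Fin n ≃ Fin k ⊕ Fin (n - k) :=
      ((finSumFinEquiv).trans (finCongr (by omega))).symm
    have key : fromRows (A⁻¹ * Xᵀ) Xpᵀ * fromCols X Xp = 1 := by
      rw [Matrix.fromRows_mul_fromCols]
      have b11 : A⁻¹ * Xᵀ * X = 1 := by rw [Matrix.mul_assoc, ← hA, hAi1]
      have b12 : A⁻¹ * Xᵀ * Xp = 0 := by rw [Matrix.mul_assoc, hXp2, Matrix.mul_zero]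
      rw [b11, b12, hXp2', hXp1, Matrix.fromBlocks_one]
    have hP : X * (A⁻¹ * Xᵀ) + Xp * Xpᵀ = 1 := by
      have := (Matrix.fromCols_mul_fromRows_eq_one_comm e X Xp (A⁻¹ * Xᵀ) Xpᵀ).mpr key
      rwa [Matrix.fromCols_mul_fromRows] at this
    set P : Matrix (Fin n) (Fin n) ℝ := X * (A⁻¹ * Xᵀ) with hPdef
    have hPT : Pᵀ = P := by
      rw [hPdef, Matrix.transpose_mul, Matrix.transpose_mul, Matrix.transpose_transpose, hAiT,
        ← Matrix.mul_assoc]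
    have hQ : Xp * Xpᵀ = 1 - P := by
      rw [eq_sub_iff_add_eq, add_comm, hP]
    -- QVQ = 0
    have hQVQ : (1 - P) * V * (1 - P) = 0 := by
      rw [← hQ]
      calc Xp * Xpᵀ * V * (Xp * Xpᵀ) = Xp * (Xpᵀ * V * Xp) * Xpᵀ := by
            simp only [Matrix.mul_assoc]
        _ = 0 := by rw [hVXp, Matrix.mul_zero, Matrix.zero_mul]
    have hVeq : V = P * V + V * P - P * V * P := by
      have expand : V - (P * V + V * P - P * V * P) = (1 - P) * V * (1 - P) := by
        noncomm_ring
      exact sub_eq_zero.mp (expand.trans hQVQ)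
    refine ⟨(1 - (2⁻¹ : ℝ) • P) * (V * (X * A⁻¹)), ?_⟩
    have hWT : ((1 - (2⁻¹ : ℝ) • P) * (V * (X * A⁻¹)))ᵀ =
        A⁻¹ * Xᵀ * V * (1 - (2⁻¹ : ℝ) • P) := by
      simp only [Matrix.transpose_mul, Matrix.transpose_sub, Matrix.transpose_smul,
        Matrix.transpose_one, hPT, hAiT, hV, Matrix.transpose_transpose]
      try simp only [Matrix.mul_assoc]
    rw [hWT]
    have h1 : X * (A⁻¹ * Xᵀ * V * (1 - (2⁻¹ : ℝ) • P)) = P * V * (1 - (2⁻¹ : ℝ) • P) := by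
      simp only [hPdef, Matrix.mul_assoc]
    have h2 : (1 - (2⁻¹ : ℝ) • P) * (V * (X * A⁻¹)) * Xᵀ = (1 - (2⁻¹ : ℝ) • P) * (V * P) := by
      simp only [hPdef, Matrix.mul_assoc]
    rw [h1, h2]
    have : P * V * (1 - (2⁻¹ : ℝ) • P) + (1 - (2⁻¹ : ℝ) • P) * (V * P)
        = P * V + V * P - P * V * P := by
      rw [Matrix.mul_sub, Matrix.sub_mul]
      rw [Matrix.mul_smul, Matrix.smul_mul, Matrix.mul_one, Matrix.one_mul]
      simp only [← Matrix.mul_assoc]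
      module
    rw [this, ← hVeq]
  · rintro ⟨W, rfl⟩
    rw [Matrix.mul_add, Matrix.add_mul]
    rw [show Xpᵀ * (X * Wᵀ) = 0 by rw [← Matrix.mul_assoc, hXp2', Matrix.zero_mul]]
    rw [Matrix.zero_mul, Matrix.mul_assoc, Matrix.mul_assoc, hXp2, Matrix.mul_zero,
      Matrix.mul_zero]
    simp
end

section
/- Let X ∈ ℝ^{n×k} have rank k and Σ = XX^T = UDU^T with U ∈ St(n,k), D diagonal positive. For V symmetric with X_⊥^T V X_⊥ = 0, the horizontal lift V^# = X(X^TX)^{−1}F + X_⊥K with F = S_{X^TX}(X^TVX) and K = X_⊥^T V X(X^TX)^{−1} satisfies X(V^#)^T + V^#X^T = V. -/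
open Matrix

theorem horizontal_lift_fixed_rank (n k : ℕ)
    (X : Matrix (Fin n) (Fin k) ℝ) (hX : X.rank = k)
    (Xp : Matrix (Fin n) (Fin (n - k)) ℝ)
    (hXp1 : Xpᵀ * Xp = 1) (hXp2 : Xᵀ * Xp = 0)
    (V : Matrix (Fin n) (Fin n) ℝ) (hV : Vᵀ = V) (hVt : Xpᵀ * V * Xp = 0)
    (F : Matrix (Fin k) (Fin k) ℝ) (hF : Fᵀ = F)
    (hSyl : (Xᵀ * X) * F + F * (Xᵀ * X) = Xᵀ * V * X) :
    X * (X * (Xᵀ * X)⁻¹ * F + Xp * (Xpᵀ * V * X * (Xᵀ * X)⁻¹))ᵀ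
      + (X * (Xᵀ * X)⁻¹ * F + Xp * (Xpᵀ * V * X * (Xᵀ * X)⁻¹)) * Xᵀ = V := by
  set A := Xᵀ * X with hA
  -- A is invertible
  have hrank : A.rank = Fintype.card (Fin k) := by
    rw [hA, Matrix.rank_transpose_mul_self, hX, Fintype.card_fin]
  have hAunit : IsUnit A := by
    rw [← Matrix.mulVec_surjective_iff_isUnit]
    have htop : LinearMap.range A.mulVecLin = ⊤ :=
      Submodule.eq_top_of_finrank_eq (by
        rw [← Matrix.rank, hrank]
        simp [Module.finrank_pi])
    intro v
    have := LinearMap.range_eq_top.mp htop v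
    obtain ⟨w, hw⟩ := this
    exact ⟨w, hw⟩
  have hAdet : IsUnit A.det := (Matrix.isUnit_iff_isUnit_det A).mp hAunit
  have hAsymm : Aᵀ = A := by rw [hA, Matrix.transpose_mul, Matrix.transpose_transpose]
  have hAinv_symm : (A⁻¹)ᵀ = A⁻¹ := by rw [Matrix.transpose_nonsing_inv, hAsymm]
  have hinvA : A⁻¹ * A = 1 := Matrix.nonsing_inv_mul A hAdet
  -- k ≤ n
  have hkn : k ≤ n := by
    have := Matrix.rank_le_card_height X
    rw [hX, Fintype.card_fin] at this
    exact this
  -- the projections sum to 1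
  have e : Fin n ≃ Fin k ⊕ Fin (n - k) :=
    (finCongr (Nat.add_sub_cancel' hkn).symm).trans finSumFinEquiv.symm
  have hXpX : Xpᵀ * X = 0 := by
    have := congrArg Matrix.transpose hXp2
    simpa [Matrix.transpose_mul] using this
  have hRC : fromRows (A⁻¹ * Xᵀ) Xpᵀ * fromCols X Xp = 1 := by
    rw [Matrix.fromRows_mul_fromCols]
    rw [show A⁻¹ * Xᵀ * X = 1 by rw [Matrix.mul_assoc, ← hA, hinvA]]
    rw [show A⁻¹ * Xᵀ * Xp = 0 by rw [Matrix.mul_assoc, hXp2, Matrix.mul_zero]]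
    rw [hXpX, hXp1, Matrix.fromBlocks_one]
  have hPQ : X * (A⁻¹ * Xᵀ) + Xp * Xpᵀ = 1 := by
    have := (Matrix.fromCols_mul_fromRows_eq_one_comm e X Xp (A⁻¹ * Xᵀ) Xpᵀ).mpr hRC
    rwa [Matrix.fromCols_mul_fromRows] at this
  set P := X * (A⁻¹ * Xᵀ) with hP
  set Q := Xp * Xpᵀ with hQ
  -- key Sylvester consequence
  have e3 : X * (F * (A⁻¹ * Xᵀ)) + X * (A⁻¹ * (F * Xᵀ)) = P * V * P := by
    have h := congrArg (fun M => X * (A⁻¹ * (M * (A⁻¹ * Xᵀ)))) hSyl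
    simp only [Matrix.add_mul, Matrix.mul_add, Matrix.mul_assoc] at h
    rw [Matrix.nonsing_inv_mul_cancel_left A (F * (A⁻¹ * Xᵀ)) hAdet,
      Matrix.mul_nonsing_inv_cancel_left A Xᵀ hAdet] at h
    rw [hP]
    simp only [Matrix.mul_assoc]
    exact h
  have e4 : Q * V * Q = 0 := by
    rw [hQ]
    calc Xp * Xpᵀ * V * (Xp * Xpᵀ) = Xp * (Xpᵀ * V * Xp) * Xpᵀ := by
          simp only [Matrix.mul_assoc]
      _ = 0 := by rw [hVt, Matrix.mul_zero, Matrix.zero_mul]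
  -- expand the transposes in the goal
  have ht : (X * A⁻¹ * F + Xp * (Xpᵀ * V * X * A⁻¹))ᵀ
      = F * (A⁻¹ * Xᵀ) + A⁻¹ * (Xᵀ * (V * (Xp * Xpᵀ))) := by
    simp only [Matrix.transpose_add, Matrix.transpose_mul, Matrix.transpose_transpose,
      hF, hV, hAinv_symm, Matrix.mul_assoc]
  have hPVQ : X * (A⁻¹ * (Xᵀ * (V * (Xp * Xpᵀ)))) = P * V * Q := by
    rw [hP, hQ]; simp only [Matrix.mul_assoc]
  have hQVP : Xp * (Xpᵀ * V * X * A⁻¹) * Xᵀ = Q * V * P := by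
    rw [hP, hQ]; simp only [Matrix.mul_assoc]
  have hXAF : X * A⁻¹ * F * Xᵀ = X * (A⁻¹ * (F * Xᵀ)) := by
    simp only [Matrix.mul_assoc]
  rw [ht, Matrix.mul_add, Matrix.add_mul, hPVQ, hQVP, hXAF]
  have key : X * (F * (A⁻¹ * Xᵀ)) + P * V * Q + (X * (A⁻¹ * (F * Xᵀ)) + Q * V * P)
      = P * V * P + P * V * Q + Q * V * P := by
    rw [← e3]; abel
  rw [key]
  have final : P * V * P + P * V * Q + Q * V * P = (P + Q) * V * (P + Q) - Q * V * Q := by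
    noncomm_ring
  rw [final, e4, hPQ, sub_zero, Matrix.one_mul, Matrix.mul_one]
end

section
/- Let X = [X_r X_{k−r} 0] and Y = [Y_r Y_{l−r} 0] be n×n matrices with X^T Y = Diag(D_r, 0), D_r diagonal positive of size r, and let R = Diag(I_r, R_{n−r}) ∈ O(n) with the first (l−r) columns of R_{n−r} being (R_0; R_1). Then XRY^T = X_r Y_r^T + X_{k−r} R_0 Y_{l−r}^T, and for two such orthogonal matrices R, R′, one has sym(XRY^T) = sym(XR′Y^T) if and only if R_0 = R_0′, provided X_{k−r}^T X_{k−r} and Y_{l−r}^T Y_{l−r} are invertible and X_{k−r}^T Y_{l−r} = 0. -/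
open Matrix

/-- Symmetric part of a square matrix. -/
noncomputable def symPart {n : Type*} [Fintype n] (M : Matrix n n ℝ) : Matrix n n ℝ :=
  (1 / 2 : ℝ) • (M + Mᵀ)

theorem block_geodesic_parametrization (n r kr nk lr nl : ℕ)
    (Xr : Matrix (Fin n) (Fin r) ℝ) (Xk : Matrix (Fin n) (Fin kr) ℝ)
    (Yr : Matrix (Fin n) (Fin r) ℝ) (Yl : Matrix (Fin n) (Fin lr) ℝ)
    (D : Fin r → ℝ) (hD : ∀ i, 0 < D i)
    (R0 R0' : Matrix (Fin kr) (Fin lr) ℝ) (R1 R1' : Matrix (Fin nk) (Fin lr) ℝ)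
    (R2 R2' : Matrix (Fin kr ⊕ Fin nk) (Fin nl) ℝ)
    (hXk : IsUnit (Xkᵀ * Xk)) (hYl : IsUnit (Ylᵀ * Yl)) (hXYl : Xkᵀ * Yl = 0)
    (X : Matrix (Fin n) (Fin r ⊕ (Fin kr ⊕ Fin nk)) ℝ)
    (hX : X = Matrix.fromCols Xr (Matrix.fromCols Xk 0))
    (Y : Matrix (Fin n) (Fin r ⊕ (Fin lr ⊕ Fin nl)) ℝ)
    (hY : Y = Matrix.fromCols Yr (Matrix.fromCols Yl 0))
    (hXY : Xᵀ * Y = Matrix.fromBlocks (Matrix.diagonal D) 0 0 0)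
    (R R' : Matrix (Fin r ⊕ (Fin kr ⊕ Fin nk)) (Fin r ⊕ (Fin lr ⊕ Fin nl)) ℝ)
    (hR : R = Matrix.fromBlocks 1 0 0 (Matrix.fromCols (Matrix.fromRows R0 R1) R2))
    (hR' : R' = Matrix.fromBlocks 1 0 0 (Matrix.fromCols (Matrix.fromRows R0' R1') R2'))
    (hRo : Rᵀ * R = 1) (hRo' : R'ᵀ * R' = 1) :
    X * R * Yᵀ = Xr * Yrᵀ + Xk * R0 * Ylᵀ ∧
    (symPart (X * R * Yᵀ) = symPart (X * R' * Yᵀ) ↔ R0 = R0') := by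
  have key : ∀ (S0 : Matrix (Fin kr) (Fin lr) ℝ) (S1 : Matrix (Fin nk) (Fin lr) ℝ)
      (S2 : Matrix (Fin kr ⊕ Fin nk) (Fin nl) ℝ),
      Matrix.fromCols Xr (Matrix.fromCols Xk (0 : Matrix (Fin n) (Fin nk) ℝ)) *
        Matrix.fromBlocks (1 : Matrix (Fin r) (Fin r) ℝ) 0 0 (Matrix.fromCols (Matrix.fromRows S0 S1) S2) *
        (Matrix.fromCols Yr (Matrix.fromCols Yl (0 : Matrix (Fin n) (Fin nl) ℝ)))ᵀ
        = Xr * Yrᵀ + Xk * S0 * Ylᵀ := by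
    intro S0 S1 S2
    rw [Matrix.fromCols_mul_fromBlocks, Matrix.transpose_fromCols,
      Matrix.fromCols_mul_fromRows, Matrix.transpose_fromCols]
    have h1 : Matrix.fromCols Xk (0 : Matrix (Fin n) (Fin nk) ℝ) *
        Matrix.fromCols (Matrix.fromRows S0 S1) S2 =
        Matrix.fromCols (Xk * S0) (Matrix.fromCols Xk (0 : Matrix (Fin n) (Fin nk) ℝ) * S2) := by
      rw [Matrix.mul_fromCols, Matrix.fromCols_mul_fromRows]
      simp
    rw [h1]
    simp [Matrix.fromCols_mul_fromRows, Matrix.mul_assoc]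
  have e1 : X * R * Yᵀ = Xr * Yrᵀ + Xk * R0 * Ylᵀ := by rw [hX, hY, hR]; exact key R0 R1 R2
  have e2 : X * R' * Yᵀ = Xr * Yrᵀ + Xk * R0' * Ylᵀ := by rw [hX, hY, hR']; exact key R0' R1' R2'
  refine ⟨e1, ?_, fun h => by rw [e1, e2, h]⟩
  intro h
  obtain ⟨iX⟩ := hXk.nonempty_invertible
  obtain ⟨iY⟩ := hYl.nonempty_invertible
  have h2 : Xk * R0 * Ylᵀ + (Xk * R0 * Ylᵀ)ᵀ = Xk * R0' * Ylᵀ + (Xk * R0' * Ylᵀ)ᵀ := by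
    have := h
    simp only [symPart, e1, e2, transpose_add, smul_add] at this
    have h3 : (Xr * Yrᵀ + Xk * R0 * Ylᵀ) + (Xr * Yrᵀ + Xk * R0 * Ylᵀ)ᵀ =
        (Xr * Yrᵀ + Xk * R0' * Ylᵀ) + (Xr * Yrᵀ + Xk * R0' * Ylᵀ)ᵀ := by
      have h4 := congrArg (fun M => (2 : ℝ) • M) this
      simpa [symPart, e1, e2, smul_smul] using h4
    simp only [transpose_add] at h3
    have := h3
    abel_nf at this ⊢
    linear_combination (norm := abel) this
  have h5 : Xkᵀ * (Xk * R0 * Ylᵀ + (Xk * R0 * Ylᵀ)ᵀ) * Yl =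
      Xkᵀ * (Xk * R0' * Ylᵀ + (Xk * R0' * Ylᵀ)ᵀ) * Yl := by rw [h2]
  have simp5 : ∀ S0 : Matrix (Fin kr) (Fin lr) ℝ,
      Xkᵀ * (Xk * S0 * Ylᵀ + (Xk * S0 * Ylᵀ)ᵀ) * Yl = (Xkᵀ * Xk) * S0 * (Ylᵀ * Yl) := by
    intro S0
    rw [Matrix.mul_add, Matrix.add_mul]
    simp only [Matrix.transpose_mul, Matrix.transpose_transpose]
    have hz : Xkᵀ * (Yl * (S0ᵀ * Xkᵀ)) * Yl = 0 := by
      rw [← Matrix.mul_assoc Xkᵀ Yl, hXYl]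
      simp
    rw [hz, add_zero]
    simp [Matrix.mul_assoc]
  rw [simp5, simp5] at h5
  have cancel : ∀ S : Matrix (Fin kr) (Fin lr) ℝ,
      ⅟(Xkᵀ * Xk) * ((Xkᵀ * Xk) * S * (Ylᵀ * Yl)) * ⅟(Ylᵀ * Yl) = S := by
    intro S
    rw [Matrix.mul_assoc (Xkᵀ * Xk) S (Ylᵀ * Yl),
      ← Matrix.mul_assoc (⅟(Xkᵀ * Xk)) (Xkᵀ * Xk) (S * (Ylᵀ * Yl)),
      invOf_mul_self, Matrix.one_mul,
      Matrix.mul_assoc S (Ylᵀ * Yl) (⅟(Ylᵀ * Yl)), mul_invOf_self, Matrix.mul_one]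
  rw [← cancel R0, ← cancel R0', h5]
end
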